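/- There exists a (K_2,S(C_3))-URD(12;7,2) in which the two 3-sun classes on vertex set Z_12 are {(0,4,8;10,2,7), (1,5,9;11,3,6)} and {(2,6,10;8,0,5), (3,7,11;9,1,4)}; that is, these two sets are parallel classes of vertex-disjoint 3-suns in K_12 whose edge sets are pairwise disjoint, and the remaining 42 edges of K_12 can be partitioned into 7 perfect matchings. -/

import Mathlib

open SimpleGraph

/-- The `h`-sun `S(C_h)`: an `h`-cycle on the vertices `Sum.inl i` together with
a pendant edge from each cycle vertex `Sum.inl i` to the pendant vertex `Sum.inr i`. -/
def sunGraph (h : ℕ) : SimpleGraph (Fin h ⊕ Fin h) :=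
  SimpleGraph.fromRel fun u w =>
    (∃ i j : Fin h, u = Sum.inl i ∧ w = Sum.inl j ∧ (i.val + 1) % h = j.val) ∨
    (∃ i : Fin h, u = Sum.inl i ∧ w = Sum.inr i)

/-- `H` is a parallel class of `h`-suns: `H` is the vertex-disjoint union of
copies of the `h`-sun, and every vertex lies in exactly one copy. -/
def IsSunClass (h : ℕ) {V : Type*} (H : SimpleGraph V) : Prop :=
  ∃ (k : ℕ) (φ : Fin k → Fin h ⊕ Fin h → V),
    (∀ x : V, ∃! p : Fin k × (Fin h ⊕ Fin h), φ p.1 p.2 = x) ∧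
    ∀ x y, H.Adj x y ↔ ∃ a u w, (sunGraph h).Adj u w ∧ φ a u = x ∧ φ a w = y

/-- `H` is a parallel class of copies of `K₂`, i.e. a perfect matching:
every vertex is adjacent to exactly one other vertex. -/
def IsMatchingClass {V : Type*} (H : SimpleGraph V) : Prop :=
  ∀ x : V, ∃! y : V, H.Adj x y

/-- A `(K₂, S(C_h))`-URGDD`(r,s)` of the graph `G`: a decomposition of the
edge set of `G` into `r` parallel classes of single edges (perfect matchings)
and `s` parallel classes of `h`-suns. -/
def IsURGDD {V : Type*} (G : SimpleGraph V) (h r s : ℕ) : Prop :=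
  ∃ C : Fin r ⊕ Fin s → SimpleGraph V,
    (∀ i, C i ≤ G) ∧
    (∀ x y, G.Adj x y → ∃! i, (C i).Adj x y) ∧
    (∀ i : Fin r, IsMatchingClass (C (Sum.inl i))) ∧
    (∀ j : Fin s, IsSunClass h (C (Sum.inr j)))

/-- A `(K₂, S(C_h))`-URD`(v;r,s)`: a uniformly resolvable decomposition of the
complete graph `K_v` into `r` perfect matchings and `s` parallel classes of `h`-suns. -/
def IsURD (v h r s : ℕ) : Prop :=
  IsURGDD (⊤ : SimpleGraph (Fin v)) h r s

/-- The 3-sun `(a₁,a₂,a₃; b₁,b₂,b₃)` as a subgraph of `K₁₂`: the triangle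
`(a₁,a₂,a₃)` together with the pendant edges `{a₁,b₁}, {a₂,b₂}, {a₃,b₃}`. -/
def sunBlock (a₁ a₂ a₃ b₁ b₂ b₃ : Fin 12) : SimpleGraph (Fin 12) :=
  SimpleGraph.fromEdgeSet
    {s(a₁, a₂), s(a₂, a₃), s(a₃, a₁), s(a₁, b₁), s(a₂, b₂), s(a₃, b₃)}

/-- A graph on `Fin 12` given by an explicit list of edges. -/
def listGraph (l : List (Fin 12 × Fin 12)) : SimpleGraph (Fin 12) where
  Adj x y := x ≠ y ∧ ((x, y) ∈ l ∨ (y, x) ∈ l)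
  symm := ⟨by intro x y ⟨h1, h2⟩; exact ⟨h1.symm, h2.symm⟩⟩
  loopless := ⟨by intro x ⟨h1, _⟩; exact h1 rfl⟩

instance (l : List (Fin 12 × Fin 12)) : DecidableRel (listGraph l).Adj :=
  fun x y => inferInstanceAs (Decidable (x ≠ y ∧ ((x, y) ∈ l ∨ (y, x) ∈ l)))

instance : DecidableRel (sunGraph 3).Adj := fun u w =>
  inferInstanceAs (Decidable (u ≠ w ∧
    (((∃ i j : Fin 3, u = Sum.inl i ∧ w = Sum.inl j ∧ (i.val + 1) % 3 = j.val) ∨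
      (∃ i : Fin 3, u = Sum.inl i ∧ w = Sum.inr i)) ∨
     ((∃ i j : Fin 3, w = Sum.inl i ∧ u = Sum.inl j ∧ (i.val + 1) % 3 = j.val) ∨
      (∃ i : Fin 3, w = Sum.inl i ∧ u = Sum.inr i)))))

def M : Fin 7 → List (Fin 12 × Fin 12)
  | 0 => [(0,1),(2,3),(4,5),(6,7),(8,9),(10,11)]
  | 1 => [(0,2),(1,3),(4,9),(5,8),(6,11),(7,10)]
  | 2 => [(0,3),(1,2),(4,10),(5,11),(6,8),(7,9)]
  | 3 => [(0,5),(1,4),(2,7),(3,6),(8,10),(9,11)]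
  | 4 => [(0,7),(1,6),(2,5),(3,4),(8,11),(9,10)]
  | 5 => [(0,9),(1,8),(2,11),(3,10),(4,6),(5,7)]
  | 6 => [(0,11),(1,10),(2,9),(3,8),(4,7),(5,6)]

def S : Fin 2 → List (Fin 12 × Fin 12)
  | 0 => [(0,4),(4,8),(8,0),(0,10),(4,2),(8,7),(1,5),(5,9),(9,1),(1,11),(5,3),(9,6)]
  | 1 => [(2,6),(6,10),(10,2),(2,8),(6,0),(10,5),(3,7),(7,11),(11,3),(3,9),(7,1),(11,4)]

def myC : Fin 7 ⊕ Fin 2 → SimpleGraph (Fin 12)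
  | Sum.inl i => listGraph (M i)
  | Sum.inr j => listGraph (S j)

instance : ∀ i, DecidableRel (myC i).Adj
  | Sum.inl i => inferInstanceAs (DecidableRel (listGraph (M i)).Adj)
  | Sum.inr j => inferInstanceAs (DecidableRel (listGraph (S j)).Adj)

instance {α : Type*} [Fintype α] [DecidableEq α] (p : α → Prop) [DecidablePred p] :
    Decidable (∃! a, p a) :=
  inferInstanceAs (Decidable (∃ a, p a ∧ ∀ b, p b → b = a))

def φ₀ : Fin 2 → Fin 3 ⊕ Fin 3 → Fin 12
  | 0, Sum.inl 0 => 0 | 0, Sum.inl 1 => 4 | 0, Sum.inl 2 => 8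
  | 0, Sum.inr 0 => 10 | 0, Sum.inr 1 => 2 | 0, Sum.inr 2 => 7
  | 1, Sum.inl 0 => 1 | 1, Sum.inl 1 => 5 | 1, Sum.inl 2 => 9
  | 1, Sum.inr 0 => 11 | 1, Sum.inr 1 => 3 | 1, Sum.inr 2 => 6

def φ₁ : Fin 2 → Fin 3 ⊕ Fin 3 → Fin 12
  | 0, Sum.inl 0 => 2 | 0, Sum.inl 1 => 6 | 0, Sum.inl 2 => 10
  | 0, Sum.inr 0 => 8 | 0, Sum.inr 1 => 0 | 0, Sum.inr 2 => 5
  | 1, Sum.inl 0 => 3 | 1, Sum.inl 1 => 7 | 1, Sum.inl 2 => 11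
  | 1, Sum.inr 0 => 9 | 1, Sum.inr 1 => 1 | 1, Sum.inr 2 => 4

set_option maxHeartbeats 2000000 in
/-- There is a `(K₂, S(C₃))`-URD`(12;7,2)` whose two 3-sun classes are
`{(0,4,8;10,2,7), (1,5,9;11,3,6)}` and `{(2,6,10;8,0,5), (3,7,11;9,1,4)}`. -/
theorem stmt_16 :
    ∃ C : Fin 7 ⊕ Fin 2 → SimpleGraph (Fin 12),
      (∀ x y : Fin 12, x ≠ y → ∃! i, (C i).Adj x y) ∧
      (∀ i : Fin 7, IsMatchingClass (C (Sum.inl i))) ∧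
      (∀ j : Fin 2, IsSunClass 3 (C (Sum.inr j))) ∧
      C (Sum.inr 0) = sunBlock 0 4 8 10 2 7 ⊔ sunBlock 1 5 9 11 3 6 ∧
      C (Sum.inr 1) = sunBlock 2 6 10 8 0 5 ⊔ sunBlock 3 7 11 9 1 4 := by
  refine ⟨myC, ?_, ?_, ?_, ?_, ?_⟩
  · decide
  · intro i
    show ∀ x, ∃! y, (myC (Sum.inl i)).Adj x y
    revert i; decide
  · intro j
    fin_cases j
    · exact ⟨2, φ₀, by decide, by decide⟩
    · exact ⟨2, φ₁, by decide, by decide⟩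
  · ext x y
    simp only [myC, sunBlock, SimpleGraph.sup_adj, SimpleGraph.fromEdgeSet_adj,
      Set.mem_insert_iff, Set.mem_singleton_iff]
    revert x y
    decide
  · ext x y
    simp only [myC, sunBlock, SimpleGraph.sup_adj, SimpleGraph.fromEdgeSet_adj,
      Set.mem_insert_iff, Set.mem_singleton_iff]
    revert x y
    decide
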